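/- Let v_s = f(G,K) u₀ ∈ V^d, where u₀ = (αG + βS)v₀ with α an even and β an odd scalar, and f(G,K) = Σ_ℓ a_ℓ G^{n−2ℓ} K^ℓ is a homogeneous polynomial of degree n in G, K (with deg G = 1, deg K = 2). If P v_s = 0 then P u₀ = 0; consequently u₀ satisfies H u₀ = 0, P u₀ = 0 and D u₀ = −(d−1) u₀, i.e., u₀ is a lowest weight vector for the subalgebra sch(1) with conformal weight d−1. -/

import Mathlib

/-- The `N = 1` super Schrödinger algebra 𝔰(1/1) represented on a complex vector space
`V`, together with the lowest weight (Verma) structure of conformal weight `d` and mass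
`m`.  The even generators are `H, P, G, D, K, M` (satisfying the sch(1) relations, `M`
central), the odd generators are `Q, S, X`, and `Chi` is the action of the odd scalar χ
(`χ² = m/2`, `X v₀ = χ v₀`).  Relations between generators not listed below vanish.
The Verma module `V^d` has (super) basis `{G^k K^ℓ v₀, G^k K^ℓ S v₀}` over the
coefficient superalgebra `ℂ[χ]`, i.e. the ℂ-basis `{G^k K^ℓ S^a χ^c v₀}`. -/
structure SSch1Verma (d m : ℂ) (V : Type*) [AddCommGroup V] [Module ℂ V] where
  H : Module.End ℂ V
  P : Module.End ℂ V
  G : Module.End ℂ V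
  D : Module.End ℂ V
  K : Module.End ℂ V
  M : Module.End ℂ V
  Q : Module.End ℂ V
  S : Module.End ℂ V
  X : Module.End ℂ V
  Chi : Module.End ℂ V
  -- nonvanishing even-even commutators
  rel_HD : H * D - D * H = (2 : ℂ) • H
  rel_HK : H * K - K * H = D
  rel_DK : D * K - K * D = (2 : ℂ) • K
  rel_PG : P * G - G * P = M
  rel_HG : H * G - G * H = P
  rel_DG : D * G - G * D = G
  rel_PD : P * D - D * P = P
  rel_PK : P * K - K * P = G
  -- vanishing even-even commutators
  rel_HP : H * P = P * H
  rel_HM : H * M = M * H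
  rel_PM : P * M = M * P
  rel_GK : G * K = K * G
  rel_GM : G * M = M * G
  rel_DM : D * M = M * D
  rel_KM : K * M = M * K
  -- nonvanishing even-odd commutators
  rel_QD : Q * D - D * Q = Q
  rel_QK : Q * K - K * Q = S
  rel_DS : D * S - S * D = S
  rel_HS : H * S - S * H = Q
  rel_QG : Q * G - G * Q = X
  rel_PS : P * S - S * P = X
  -- vanishing even-odd commutators
  rel_QH : Q * H = H * Q
  rel_QP : Q * P = P * Q
  rel_QM : Q * M = M * Q
  rel_SG : S * G = G * S
  rel_SK : S * K = K * S
  rel_SM : S * M = M * S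
  rel_XH : X * H = H * X
  rel_XP : X * P = P * X
  rel_XG : X * G = G * X
  rel_XD : X * D = D * X
  rel_XK : X * K = K * X
  rel_XM : X * M = M * X
  -- odd-odd anticommutators
  rel_QQ : Q * Q + Q * Q = -((2 : ℂ) • H)
  rel_SS : S * S + S * S = -((2 : ℂ) • K)
  rel_XX : X * X + X * X = -M
  rel_QX : Q * X + X * Q = -P
  rel_SX : S * X + X * S = -G
  rel_QS : Q * S + S * Q = -D
  -- χ is an odd scalar: it commutes with the even generators, anticommutes with the
  -- odd generators and satisfies χ² = m/2
  chi_H : Chi * H = H * Chi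
  chi_P : Chi * P = P * Chi
  chi_G : Chi * G = G * Chi
  chi_D : Chi * D = D * Chi
  chi_K : Chi * K = K * Chi
  chi_M : Chi * M = M * Chi
  chi_Q : Chi * Q = -(Q * Chi)
  chi_S : Chi * S = -(S * Chi)
  chi_X : Chi * X = -(X * Chi)
  chi_sq : Chi * Chi = (m / 2) • (1 : Module.End ℂ V)
  -- the lowest weight vector
  v0 : V
  lw_Q : Q v0 = 0
  lw_P : P v0 = 0
  lw_D : D v0 = (-d) • v0
  lw_M : M v0 = m • v0
  lw_X : X v0 = Chi v0
  -- PBW basis of the Verma module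
  pbw_indep : LinearIndependent ℂ (fun i : ℕ × ℕ × Bool × Bool =>
    (G ^ i.1 * K ^ i.2.1 * (if i.2.2.1 then S else 1) * (if i.2.2.2 then Chi else 1)) v0)
  pbw_span : Submodule.span ℂ (Set.range (fun i : ℕ × ℕ × Bool × Bool =>
    (G ^ i.1 * K ^ i.2.1 * (if i.2.2.1 then S else 1) * (if i.2.2.2 then Chi else 1)) v0)) = ⊤

namespace SSch1Verma

variable {d m : ℂ} {V : Type*} [AddCommGroup V] [Module ℂ V]

/-- A singular vector of the Verma module: homogeneous with respect to the `D`-grading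
(i.e. a `D`-eigenvector), not a scalar multiple of the lowest weight vector `v₀`
(scalars being the coefficient superalgebra `ℂ[χ]`), and annihilated by `Q` and `P`. -/
def IsSingular (ρ : SSch1Verma d m V) (v : V) : Prop :=
  (∃ n : ℂ, ρ.D v = n • v) ∧
  (∀ a b : ℂ, v ≠ a • ρ.v0 + b • ρ.Chi ρ.v0) ∧
  ρ.Q v = 0 ∧ ρ.P v = 0

/-- A subspace invariant under the action of 𝔰(1/1) (and under the odd scalar χ). -/
def Invariant (ρ : SSch1Verma d m V) (W : Submodule ℂ V) : Prop :=
  ∀ w ∈ W, ρ.H w ∈ W ∧ ρ.P w ∈ W ∧ ρ.G w ∈ W ∧ ρ.D w ∈ W ∧ ρ.K w ∈ W ∧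
    ρ.M w ∈ W ∧ ρ.Q w ∈ W ∧ ρ.S w ∈ W ∧ ρ.X w ∈ W ∧ ρ.Chi w ∈ W

/-- The submodule generated by a set of vectors: the smallest invariant subspace
containing it. -/
def gen (ρ : SSch1Verma d m V) (s : Set V) : Submodule ℂ V :=
  sInf {W | ρ.Invariant W ∧ s ⊆ W}

/-- A singular vector of the factor module `V/J`, expressed in terms of representatives:
homogeneous with respect to the induced `D`-grading, not a scalar multiple of the image
of the lowest weight vector, and annihilated by the induced actions of `Q` and `P`. -/
def IsSingularMod (ρ : SSch1Verma d m V) (J : Submodule ℂ V) (v : V) : Prop :=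
  (∃ n : ℂ, ρ.D v - n • v ∈ J) ∧
  (∀ a b : ℂ, v - (a • ρ.v0 + b • ρ.Chi ρ.v0) ∉ J) ∧
  ρ.Q v ∈ J ∧ ρ.P v ∈ J

section Aux
variable {d m : ℂ} {V : Type*} [AddCommGroup V] [Module ℂ V] (ρ : SSch1Verma d m V)

lemma commGK : Commute ρ.G ρ.K := ρ.rel_GK

lemma H_v0 : ρ.H ρ.v0 = 0 := by
  have h := ρ.rel_QQ
  have : ((2:ℂ) • ρ.H) ρ.v0 = 0 := by
    have : ((2:ℂ) • ρ.H) = -(ρ.Q * ρ.Q + ρ.Q * ρ.Q) := by rw [h]; abel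
    rw [this]
    simp [Module.End.mul_apply, ρ.lw_Q]
  have h2 : (2:ℂ) • ρ.H ρ.v0 = 0 := this
  have := smul_right_injective V (two_ne_zero (α := ℂ))
  simpa using congrArg (fun x => ((2:ℂ))⁻¹ • x) h2

lemma P_Sx : ρ.P (ρ.S (ρ.Chi ρ.v0)) = (-(m/2)) • ρ.v0 := by
  have hPS : ρ.P * ρ.S = ρ.S * ρ.P + ρ.X := by
    have := ρ.rel_PS; rw [sub_eq_iff_eq_add] at this; rw [this]; abel
  have h1 : ρ.P (ρ.S (ρ.Chi ρ.v0)) = ρ.S (ρ.P (ρ.Chi ρ.v0)) + ρ.X (ρ.Chi ρ.v0) := by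
    have := congrArg (fun T => T (ρ.Chi ρ.v0)) hPS
    simpa [Module.End.mul_apply] using this
  have h2 : ρ.P (ρ.Chi ρ.v0) = 0 := by
    have := congrArg (fun T => T ρ.v0) ρ.chi_P
    simp only [Module.End.mul_apply] at this
    rw [← this, ρ.lw_P, map_zero]
  have h3 : ρ.X (ρ.Chi ρ.v0) = -((m/2) • ρ.v0) := by
    have hc := congrArg (fun T => T ρ.v0) ρ.chi_X
    simp only [Module.End.mul_apply] at hc
    simp only [LinearMap.neg_apply, Module.End.mul_apply] at hc
    have hx : ρ.X (ρ.Chi ρ.v0) = -(ρ.Chi (ρ.X ρ.v0)) := by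
      rw [hc, neg_neg]
    rw [hx, ρ.lw_X]
    have := congrArg (fun T => T ρ.v0) ρ.chi_sq
    simp only [Module.End.mul_apply, LinearMap.smul_apply, Module.End.one_apply] at this
    rw [this]
  rw [h1, h2, map_zero, zero_add, h3]
  simp

lemma M_Sx : ρ.M (ρ.S (ρ.Chi ρ.v0)) = m • (ρ.S (ρ.Chi ρ.v0)) := by
  have h1 : ρ.M (ρ.S (ρ.Chi ρ.v0)) = ρ.S (ρ.M (ρ.Chi ρ.v0)) := by
    have := congrArg (fun T => T (ρ.Chi ρ.v0)) ρ.rel_SM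
    simpa [Module.End.mul_apply] using this.symm
  have h2 : ρ.M (ρ.Chi ρ.v0) = ρ.Chi (ρ.M ρ.v0) := by
    have := congrArg (fun T => T ρ.v0) ρ.chi_M
    simpa [Module.End.mul_apply] using this.symm
  rw [h1, h2, ρ.lw_M]
  simp

lemma ChiS_v0 : ρ.Chi (ρ.S ρ.v0) = -(ρ.S (ρ.Chi ρ.v0)) := by
  have := congrArg (fun T => T ρ.v0) ρ.chi_S
  simpa [Module.End.mul_apply] using this

end Aux

section Aux2
variable {d m : ℂ} {V : Type*} [AddCommGroup V] [Module ℂ V] (ρ : SSch1Verma d m V)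

lemma P_Gpow_succ : ∀ k : ℕ, ρ.P * ρ.G ^ (k+1) =
    ρ.G ^ (k+1) * ρ.P + ((k:ℂ)+1) • (ρ.G ^ k * ρ.M) := by
  have hPG : ρ.P * ρ.G = ρ.G * ρ.P + ρ.M := by
    have := ρ.rel_PG; rw [sub_eq_iff_eq_add] at this; rw [this]; abel
  have hMG : ρ.M * ρ.G = ρ.G * ρ.M := (ρ.rel_GM).symm
  intro k
  induction k with
  | zero => simpa using hPG
  | succ k ih =>
      have : ρ.P * ρ.G ^ (k+2) = (ρ.P * ρ.G ^ (k+1)) * ρ.G := by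
        rw [mul_assoc, ← pow_succ]
      rw [this, ih, add_mul, smul_mul_assoc, mul_assoc, hPG, mul_assoc, hMG]
      push_cast
      simp only [pow_succ, mul_add, add_smul, one_smul, ← mul_assoc]
      abel

lemma P_Kpow_succ : ∀ l : ℕ, ρ.P * ρ.K ^ (l+1) =
    ρ.K ^ (l+1) * ρ.P + ((l:ℂ)+1) • (ρ.G * ρ.K ^ l) := by
  have hPK : ρ.P * ρ.K = ρ.K * ρ.P + ρ.G := by
    have := ρ.rel_PK; rw [sub_eq_iff_eq_add] at this; rw [this]; abel
  have hGK : ρ.G * ρ.K = ρ.K * ρ.G := ρ.rel_GK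
  intro l
  induction l with
  | zero => simpa using hPK
  | succ l ih =>
      have : ρ.P * ρ.K ^ (l+2) = (ρ.P * ρ.K ^ (l+1)) * ρ.K := by
        rw [mul_assoc, ← pow_succ]
      rw [this, ih, add_mul, smul_mul_assoc, mul_assoc, hPK]
      have hKlG : ρ.K ^ l * ρ.K * ρ.G = ρ.G * ρ.K ^ l * ρ.K := by
        rw [mul_assoc, ← hGK, ← mul_assoc, ((commGK ρ).symm.pow_left l).eq]
      push_cast
      simp only [pow_succ, mul_add, add_smul, one_smul, ← mul_assoc]
      rw [hKlG]
      abel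

lemma P_Gpow (k : ℕ) : ρ.P * ρ.G ^ k =
    ρ.G ^ k * ρ.P + (k:ℂ) • (ρ.G ^ (k-1) * ρ.M) := by
  cases k with
  | zero => simp
  | succ k => simpa using P_Gpow_succ ρ k

lemma P_Kpow (l : ℕ) : ρ.P * ρ.K ^ l =
    ρ.K ^ l * ρ.P + (l:ℂ) • (ρ.G * ρ.K ^ (l-1)) := by
  cases l with
  | zero => simp
  | succ l => simpa using P_Kpow_succ ρ l

lemma P_GK (k l : ℕ) : ρ.P * (ρ.G ^ k * ρ.K ^ l) =
    (ρ.G ^ k * ρ.K ^ l) * ρ.P + (l:ℂ) • (ρ.G ^ (k+1) * ρ.K ^ (l-1))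
      + (k:ℂ) • ((ρ.G ^ (k-1) * ρ.K ^ l) * ρ.M) := by
  have hMK : ρ.M * ρ.K ^ l = ρ.K ^ l * ρ.M :=
    (Commute.pow_right (ρ.rel_KM).symm l).eq
  calc ρ.P * (ρ.G ^ k * ρ.K ^ l)
      = (ρ.P * ρ.G ^ k) * ρ.K ^ l := by rw [mul_assoc]
    _ = (ρ.G ^ k * ρ.P + (k:ℂ) • (ρ.G ^ (k-1) * ρ.M)) * ρ.K ^ l := by rw [P_Gpow]
    _ = ρ.G ^ k * (ρ.P * ρ.K ^ l) + (k:ℂ) • (ρ.G ^ (k-1) * (ρ.M * ρ.K ^ l)) := by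
        rw [add_mul, smul_mul_assoc, mul_assoc, mul_assoc]
    _ = ρ.G ^ k * (ρ.K ^ l * ρ.P + (l:ℂ) • (ρ.G * ρ.K ^ (l-1)))
        + (k:ℂ) • (ρ.G ^ (k-1) * (ρ.K ^ l * ρ.M)) := by rw [P_Kpow, hMK]
    _ = (ρ.G ^ k * ρ.K ^ l) * ρ.P + (l:ℂ) • (ρ.G ^ (k+1) * ρ.K ^ (l-1))
        + (k:ℂ) • ((ρ.G ^ (k-1) * ρ.K ^ l) * ρ.M) := by
        rw [mul_add, mul_smul_comm, ← mul_assoc, ← mul_assoc, ← mul_assoc, ← pow_succ]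

end Aux2

section Aux3
variable {d m : ℂ} {V : Type*} [AddCommGroup V] [Module ℂ V]

/-- even PBW vector `G^k K^l v₀` -/
def wv (ρ : SSch1Verma d m V) (k l : ℕ) : V := (ρ.G ^ k * ρ.K ^ l) ρ.v0

/-- odd PBW vector `G^k K^l S χ v₀` -/
def sv (ρ : SSch1Verma d m V) (k l : ℕ) : V := (ρ.G ^ k * ρ.K ^ l) (ρ.S (ρ.Chi ρ.v0))

variable (ρ : SSch1Verma d m V)

lemma P_wv (k l : ℕ) : ρ.P (wv ρ k l) =
    (l:ℂ) • wv ρ (k+1) (l-1) + ((k:ℂ)*m) • wv ρ (k-1) l := by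
  have h := congrArg (fun T => T ρ.v0) (P_GK ρ k l)
  simp only [Module.End.mul_apply, LinearMap.add_apply, LinearMap.smul_apply] at h
  unfold wv
  simp only [Module.End.mul_apply] at *
  rw [h, ρ.lw_P, map_zero, map_zero, zero_add, ρ.lw_M, map_smul, map_smul, smul_smul]

lemma P_sv (k l : ℕ) : ρ.P (sv ρ k l) =
    (-(m/2)) • wv ρ k l + (l:ℂ) • sv ρ (k+1) (l-1) + ((k:ℂ)*m) • sv ρ (k-1) l := by
  have h := congrArg (fun T => T (ρ.S (ρ.Chi ρ.v0))) (P_GK ρ k l)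
  simp only [Module.End.mul_apply, LinearMap.add_apply, LinearMap.smul_apply] at h
  unfold sv wv
  simp only [Module.End.mul_apply] at *
  rw [h, P_Sx, M_Sx, map_smul, map_smul, map_smul, map_smul, smul_smul]

lemma GK_u0 (k l : ℕ) (α b : ℂ) :
    (ρ.G ^ k * ρ.K ^ l) (α • ρ.G ρ.v0 + b • ρ.Chi (ρ.S ρ.v0)) =
      α • wv ρ (k+1) l - b • sv ρ k l := by
  have hc : (ρ.G ^ k * ρ.K ^ l) (ρ.G ρ.v0) = wv ρ (k+1) l := by
    unfold wv
    have : ρ.G ^ k * ρ.K ^ l * ρ.G = ρ.G ^ (k+1) * ρ.K ^ l := by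
      rw [mul_assoc, ((commGK ρ).symm.pow_left l).eq, ← mul_assoc, ← pow_succ]
    have h2 := congrArg (fun T => T ρ.v0) this
    simpa [Module.End.mul_apply] using h2
  rw [map_add, map_smul, map_smul, hc, ChiS_v0, map_neg, smul_neg]
  unfold sv
  abel

end Aux3

section Aux4
variable {d m : ℂ} {V : Type*} [AddCommGroup V] [Module ℂ V] (ρ : SSch1Verma d m V)

/-- the PBW basis as a `Basis` -/
noncomputable def pbwBasis : Module.Basis (ℕ × ℕ × Bool × Bool) ℂ V :=
  Module.Basis.mk ρ.pbw_indep (by rw [ρ.pbw_span])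

lemma pbwBasis_w (k l : ℕ) : pbwBasis ρ (k, l, false, false) = wv ρ k l := by
  rw [pbwBasis, Module.Basis.mk_apply]
  simp [wv]

lemma pbwBasis_s (k l : ℕ) : pbwBasis ρ (k, l, true, true) = sv ρ k l := by
  rw [pbwBasis, Module.Basis.mk_apply]
  simp [sv, Module.End.mul_apply]

lemma coord_w (j : ℕ × ℕ × Bool × Bool) (k l : ℕ) :
    (pbwBasis ρ).coord j (wv ρ k l) = if (k, l, false, false) = j then 1 else 0 := by
  rw [← pbwBasis_w, Module.Basis.coord_apply, Module.Basis.repr_self, Finsupp.single_apply]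

lemma coord_s (j : ℕ × ℕ × Bool × Bool) (k l : ℕ) :
    (pbwBasis ρ).coord j (sv ρ k l) = if (k, l, true, true) = j then 1 else 0 := by
  rw [← pbwBasis_s, Module.Basis.coord_apply, Module.Basis.repr_self, Finsupp.single_apply]

lemma P_u0 (α b : ℂ) : ρ.P (α • ρ.G ρ.v0 + b • ρ.Chi (ρ.S ρ.v0)) =
    ((α + b / 2) * m) • ρ.v0 := by
  have hPG : ρ.P * ρ.G = ρ.G * ρ.P + ρ.M := by
    have := ρ.rel_PG; rw [sub_eq_iff_eq_add] at this; rw [this]; abel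
  have h1 : ρ.P (ρ.G ρ.v0) = m • ρ.v0 := by
    have := congrArg (fun T => T ρ.v0) hPG
    simp only [Module.End.mul_apply, LinearMap.add_apply] at this
    rw [this, ρ.lw_P, map_zero, zero_add, ρ.lw_M]
  have h2 : ρ.P (ρ.Chi (ρ.S ρ.v0)) = (m / 2) • ρ.v0 := by
    rw [ChiS_v0, map_neg, P_Sx]
    simp
  rw [map_add, map_smul, map_smul, h1, h2, smul_smul, smul_smul, ← add_smul]
  ring_nf

lemma H_u0 (α b : ℂ) : ρ.H (α • ρ.G ρ.v0 + b • ρ.Chi (ρ.S ρ.v0)) = 0 := by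
  have hHG : ρ.H * ρ.G = ρ.G * ρ.H + ρ.P := by
    have := ρ.rel_HG; rw [sub_eq_iff_eq_add] at this; rw [this]; abel
  have h1 : ρ.H (ρ.G ρ.v0) = 0 := by
    have := congrArg (fun T => T ρ.v0) hHG
    simp only [Module.End.mul_apply, LinearMap.add_apply] at this
    rw [this, H_v0, map_zero, zero_add, ρ.lw_P]
  have hHS : ρ.H * ρ.S = ρ.S * ρ.H + ρ.Q := by
    have := ρ.rel_HS; rw [sub_eq_iff_eq_add] at this; rw [this]; abel
  have h2 : ρ.H (ρ.Chi (ρ.S ρ.v0)) = 0 := by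
    rw [ChiS_v0, map_neg]
    have hc := congrArg (fun T => T (ρ.S (ρ.Chi ρ.v0))) ρ.chi_H
    simp only [Module.End.mul_apply] at hc
    have hHSx : ρ.H (ρ.S (ρ.Chi ρ.v0)) = ρ.S (ρ.H (ρ.Chi ρ.v0)) + ρ.Q (ρ.Chi ρ.v0) := by
      have := congrArg (fun T => T (ρ.Chi ρ.v0)) hHS
      simpa [Module.End.mul_apply] using this
    have hHChi : ρ.H (ρ.Chi ρ.v0) = 0 := by
      have := congrArg (fun T => T ρ.v0) ρ.chi_H
      simp only [Module.End.mul_apply] at this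
      rw [← this, H_v0, map_zero]
    have hQChi : ρ.Q (ρ.Chi ρ.v0) = 0 := by
      have := congrArg (fun T => T ρ.v0) ρ.chi_Q
      simp only [Module.End.mul_apply, LinearMap.neg_apply] at this
      have : ρ.Q (ρ.Chi ρ.v0) = -(ρ.Chi (ρ.Q ρ.v0)) := by rw [this, neg_neg]
      rw [this, ρ.lw_Q, map_zero, neg_zero]
    rw [hHSx, hHChi, map_zero, zero_add, hQChi, neg_zero]
  rw [map_add, map_smul, map_smul, h1, h2, smul_zero, smul_zero, add_zero]

lemma D_u0 (α b : ℂ) : ρ.D (α • ρ.G ρ.v0 + b • ρ.Chi (ρ.S ρ.v0)) =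
    (-(d - 1)) • (α • ρ.G ρ.v0 + b • ρ.Chi (ρ.S ρ.v0)) := by
  have hDG : ρ.D * ρ.G = ρ.G * ρ.D + ρ.G := by
    have := ρ.rel_DG; rw [sub_eq_iff_eq_add] at this; rw [this]; abel
  have h1 : ρ.D (ρ.G ρ.v0) = (-(d - 1)) • ρ.G ρ.v0 := by
    have := congrArg (fun T => T ρ.v0) hDG
    simp only [Module.End.mul_apply, LinearMap.add_apply] at this
    rw [this, ρ.lw_D, map_smul]
    rw [show (-(d-1) : ℂ) = -d + 1 by ring, add_smul, one_smul]
  have hDS : ρ.D * ρ.S = ρ.S * ρ.D + ρ.S := by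
    have := ρ.rel_DS; rw [sub_eq_iff_eq_add] at this; rw [this]; abel
  have h2 : ρ.D (ρ.Chi (ρ.S ρ.v0)) = (-(d - 1)) • ρ.Chi (ρ.S ρ.v0) := by
    have hc := congrArg (fun T => T (ρ.S ρ.v0)) ρ.chi_D
    simp only [Module.End.mul_apply] at hc
    rw [← hc]
    have hDSv : ρ.D (ρ.S ρ.v0) = (-(d - 1)) • ρ.S ρ.v0 := by
      have := congrArg (fun T => T ρ.v0) hDS
      simp only [Module.End.mul_apply, LinearMap.add_apply] at this
      rw [this, ρ.lw_D, map_smul]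
      rw [show (-(d-1) : ℂ) = -d + 1 by ring, add_smul, one_smul]
    rw [hDSv, map_smul]
  rw [map_add, map_smul, map_smul, h1, h2, smul_comm α, smul_comm b, ← smul_add]

end Aux4

section Aux5
variable {d m : ℂ} {V : Type*} [AddCommGroup V] [Module ℂ V] (ρ : SSch1Verma d m V)

lemma coeff_eqs (n : ℕ) (a : ℕ → ℂ) (α b : ℂ)
    (hPvs : ρ.P ((∑ ℓ ∈ Finset.range (n / 2 + 1), a ℓ • (ρ.G ^ (n - 2 * ℓ) * ρ.K ^ ℓ))
      (α • ρ.G ρ.v0 + b • ρ.Chi (ρ.S ρ.v0))) = 0) :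
    ∀ t ∈ Finset.range (n / 2 + 1),
      (a t * (α * ((((n - 2*t : ℕ)):ℂ) + 1) * m + b * (m/2))
        + (if t + 1 ∈ Finset.range (n / 2 + 1) then a (t+1) * (α * ((t:ℂ)+1)) else 0) = 0)
      ∧ (a t * (-(b * (((n - 2*t : ℕ):ℂ) * m)))
        + (if t + 1 ∈ Finset.range (n / 2 + 1) then a (t+1) * (-(b * ((t:ℂ)+1))) else 0) = 0) := by
  have hT : ρ.P ((∑ ℓ ∈ Finset.range (n / 2 + 1), a ℓ • (ρ.G ^ (n - 2 * ℓ) * ρ.K ^ ℓ))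
      (α • ρ.G ρ.v0 + b • ρ.Chi (ρ.S ρ.v0))) =
      ∑ ℓ ∈ Finset.range (n / 2 + 1), a ℓ •
        (α • ((ℓ:ℂ) • wv ρ (n - 2*ℓ + 1 + 1) (ℓ - 1)
              + (((n - 2*ℓ + 1 : ℕ):ℂ) * m) • wv ρ (n - 2*ℓ + 1 - 1) ℓ)
         - b • ((-(m/2)) • wv ρ (n - 2*ℓ) ℓ + (ℓ:ℂ) • sv ρ (n - 2*ℓ + 1) (ℓ - 1)
              + (((n - 2*ℓ : ℕ):ℂ) * m) • sv ρ (n - 2*ℓ - 1) ℓ)) := by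
    rw [LinearMap.sum_apply, map_sum]
    refine Finset.sum_congr rfl (fun ℓ hℓ => ?_)
    rw [LinearMap.smul_apply, GK_u0, map_smul, map_sub, map_smul, map_smul, P_wv, P_sv]
  rw [hT] at hPvs
  intro t ht
  have htle : t < n / 2 + 1 := Finset.mem_range.mp ht
  have h2n : 2 * t ≤ n := by omega
  constructor
  · -- E1 : coordinate at (n - 2t, t, false, false)
    have h1 := congrArg ((pbwBasis ρ).coord (n - 2*t, t, false, false)) hPvs
    rw [map_sum, map_zero] at h1
    have h2 : ∑ ℓ ∈ Finset.range (n / 2 + 1),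
        ((if ℓ = t then a ℓ * (α * ((((n - 2*ℓ : ℕ)):ℂ) + 1) * m + b * (m/2)) else 0)
          + (if ℓ = t + 1 then a ℓ * (α * (ℓ:ℂ)) else 0)) = 0 := by
      refine Eq.trans (Finset.sum_congr rfl fun ℓ hℓ => ?_) h1
      have hℓle : ℓ < n / 2 + 1 := Finset.mem_range.mp hℓ
      have h2ℓ : 2 * ℓ ≤ n := by omega
      simp only [map_smul, map_sub, map_add, coord_w, coord_s, smul_eq_mul,
        Prod.mk.injEq, Bool.true_eq_false, and_false, false_and, and_true, if_false,
        mul_zero, add_zero, zero_add, mul_one]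
      split_ifs <;> first | (push_cast; ring1) | (exfalso; omega)
    rw [Finset.sum_add_distrib,
        Finset.sum_ite_eq' (Finset.range (n/2+1)) t
          (fun ℓ => a ℓ * (α * ((((n - 2*ℓ : ℕ)):ℂ) + 1) * m + b * (m/2))),
        Finset.sum_ite_eq' (Finset.range (n/2+1)) (t+1)
          (fun ℓ => a ℓ * (α * (ℓ:ℂ))), if_pos ht] at h2
    convert h2 using 3
    push_cast
    ring
  · -- E2 : coordinate at (n - 2t - 1, t, true, true)
    have h1 := congrArg ((pbwBasis ρ).coord (n - 2*t - 1, t, true, true)) hPvs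
    rw [map_sum, map_zero] at h1
    have h2 : ∑ ℓ ∈ Finset.range (n / 2 + 1),
        ((if ℓ = t then a ℓ * (-(b * (((n - 2*ℓ : ℕ):ℂ) * m))) else 0)
          + (if ℓ = t + 1 then a ℓ * (-(b * (ℓ:ℂ))) else 0)) = 0 := by
      refine Eq.trans (Finset.sum_congr rfl fun ℓ hℓ => ?_) h1
      have hℓle : ℓ < n / 2 + 1 := Finset.mem_range.mp hℓ
      have h2ℓ : 2 * ℓ ≤ n := by omega
      simp only [map_smul, map_sub, map_add, coord_w, coord_s, smul_eq_mul,
        Prod.mk.injEq, Bool.false_eq_true, and_false, false_and, and_true, if_false,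
        mul_zero, add_zero, zero_add, mul_one]
      split_ifs <;> first | (push_cast; ring1) | (exfalso; omega)
    rw [Finset.sum_add_distrib,
        Finset.sum_ite_eq' (Finset.range (n/2+1)) t
          (fun ℓ => a ℓ * (-(b * (((n - 2*ℓ : ℕ):ℂ) * m)))),
        Finset.sum_ite_eq' (Finset.range (n/2+1)) (t+1)
          (fun ℓ => a ℓ * (-(b * (ℓ:ℂ)))), if_pos ht] at h2
    convert h2 using 3
    push_cast
    ring

end Aux5

end SSch1Verma

/-- If `v_s = f(G,K) u₀` with `u₀ = (αG + βS)v₀` (`β = bχ` an odd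
scalar) and `f(G,K) = Σ_ℓ a_ℓ G^{n-2ℓ} K^ℓ` a (nonzero) homogeneous polynomial of degree
`n`, and if `P v_s = 0`, then `P u₀ = 0`, and consequently `H u₀ = 0` and
`D u₀ = -(d-1) u₀`, i.e. `u₀` is a lowest weight vector for sch(1) of conformal weight
`d - 1`. -/
theorem statement1 {d m : ℂ} {V : Type*} [AddCommGroup V] [Module ℂ V]
    (ρ : SSch1Verma d m V) (n : ℕ) (a : ℕ → ℂ)
    (ha : ∃ ℓ ∈ Finset.range (n / 2 + 1), a ℓ ≠ 0)
    (α b : ℂ) (u0 : V)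
    (hu0 : u0 = α • ρ.G ρ.v0 + b • ρ.Chi (ρ.S ρ.v0))
    (f : Module.End ℂ V)
    (hf : f = ∑ ℓ ∈ Finset.range (n / 2 + 1), a ℓ • (ρ.G ^ (n - 2 * ℓ) * ρ.K ^ ℓ))
    (hPvs : ρ.P (f u0) = 0) :
    ρ.P u0 = 0 ∧ ρ.H u0 = 0 ∧ ρ.D u0 = (-(d - 1)) • u0 := by
  subst hu0 hf
  refine ⟨?_, SSch1Verma.H_u0 ρ α b, SSch1Verma.D_u0 ρ α b⟩
  rw [SSch1Verma.P_u0]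
  obtain ⟨t₀, ht₀, ha₀⟩ := ha
  have E := SSch1Verma.coeff_eqs ρ n a α b hPvs
  have hc : (α + b / 2) * m = 0 := by
    by_cases hb : b = 0
    · subst hb
      by_cases hα : α = 0
      · subst hα; ring
      · by_cases hm : m = 0
        · subst hm; ring
        · exfalso
          have key : ∀ j : ℕ, ∀ t, t < n / 2 + 1 → n / 2 ≤ t + j → a t = 0 := by
            intro j
            induction j with
            | zero =>
                intro t ht hle
                have hE1 := (E t (Finset.mem_range.mpr ht)).1
                rw [if_neg (by simp only [Finset.mem_range]; omega), add_zero] at hE1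
                simp only [zero_mul, add_zero] at hE1
                have hC : α * ((((n - 2*t : ℕ)):ℂ) + 1) * m ≠ 0 := by
                  have h1 : ((((n - 2*t : ℕ)):ℂ) + 1) ≠ 0 := by
                    intro h
                    have h2 : ((n - 2*t + 1 : ℕ) : ℂ) = 0 := by push_cast; linear_combination h
                    have := Nat.cast_eq_zero.mp h2
                    omega
                  exact mul_ne_zero (mul_ne_zero hα h1) hm
                exact (mul_eq_zero.mp hE1).resolve_right hC
            | succ j ih =>
                intro t ht hle
                by_cases hj : n / 2 ≤ t + j
                · exact ih t ht hj
                · have ht1 : t + 1 < n / 2 + 1 := by omega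
                  have hE1 := (E t (Finset.mem_range.mpr ht)).1
                  rw [if_pos (Finset.mem_range.mpr ht1), ih (t+1) ht1 (by omega)] at hE1
                  simp only [zero_mul, add_zero] at hE1
                  have hC : α * ((((n - 2*t : ℕ)):ℂ) + 1) * m ≠ 0 := by
                    have h1 : ((((n - 2*t : ℕ)):ℂ) + 1) ≠ 0 := by
                      intro h
                      have h2 : ((n - 2*t + 1 : ℕ) : ℂ) = 0 := by push_cast; linear_combination h
                      have := Nat.cast_eq_zero.mp h2
                      omega
                    exact mul_ne_zero (mul_ne_zero hα h1) hm
                  exact (mul_eq_zero.mp hE1).resolve_right hC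
          exact ha₀ (key (n/2) t₀ (Finset.mem_range.mp ht₀) (by omega))
    · -- b ≠ 0
      have hE1 := (E t₀ ht₀).1
      have hE2 := (E t₀ ht₀).2
      by_cases hmem : t₀ + 1 ∈ Finset.range (n / 2 + 1)
      · rw [if_pos hmem] at hE1 hE2
        have h2' : a t₀ * (((n - 2*t₀ : ℕ):ℂ) * m) + a (t₀+1) * (((t₀:ℂ))+1) = 0 := by
          have hmul : (-b) * (a t₀ * (((n - 2*t₀ : ℕ):ℂ) * m) + a (t₀+1) * (((t₀:ℂ))+1)) = 0 := by
            linear_combination hE2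
          exact (mul_eq_zero.mp hmul).resolve_left (neg_ne_zero.mpr hb)
        have hfin : a t₀ * ((α + b / 2) * m) = 0 := by
          linear_combination hE1 - α * h2'
        exact (mul_eq_zero.mp hfin).resolve_left ha₀
      · rw [if_neg hmem, add_zero] at hE1 hE2
        have h2' : a t₀ * (((n - 2*t₀ : ℕ):ℂ) * m) = 0 := by
          have hmul : (-b) * (a t₀ * (((n - 2*t₀ : ℕ):ℂ) * m)) = 0 := by
            linear_combination hE2
          exact (mul_eq_zero.mp hmul).resolve_left (neg_ne_zero.mpr hb)
        have hfin : a t₀ * ((α + b / 2) * m) = 0 := by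
          linear_combination hE1 - α * h2'
        exact (mul_eq_zero.mp hfin).resolve_left ha₀
  rw [hc, zero_smul]
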